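/- Let A be a normal element (A A* = A* A) of a unital C*-algebra 𝔄 and let f : ℂ → ℂ be continuous on the spectrum of A. If a state ω on 𝔄 is an eigenstate of A with eigenvalue λ ∈ ℂ, then ω is an eigenstate of f(A) (defined via the continuous functional calculus for the normal element A) with eigenvalue f(λ). -/

import Mathlib

variable {𝔄 : Type*} [CStarAlgebra 𝔄]

/-- A state on a unital C*-algebra `𝔄`: a continuous linear functional `ω : 𝔄 → ℂ`
which is normalized (`ω 1 = 1`) and positive (`ω (a* a)` is a nonnegative real number). -/
def IsState (ω : 𝔄 → ℂ) : Prop :=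
  Continuous ω ∧ IsLinearMap ℂ ω ∧ ω 1 = 1 ∧
    ∀ a : 𝔄, ∃ r : ℝ, 0 ≤ r ∧ ω (star a * a) = (r : ℂ)

/-- `ω` is an eigenstate of `A` with eigenvalue `l` if `ω (B * A) = l * ω B` for all `B`. -/
def IsEigenstate (ω : 𝔄 → ℂ) (A : 𝔄) (l : ℂ) : Prop :=
  ∀ B : 𝔄, ω (B * A) = l * ω B

section Aux

variable {ω : 𝔄 → ℂ}

/-- A state sends stars to conjugates. -/
lemma IsState.map_star (hω : IsState ω) (a : 𝔄) : ω (star a) = starRingEnd ℂ (ω a) := by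
  obtain ⟨hcont, hlin, hone, hpos⟩ := hω
  have key : ∀ b : 𝔄, (ω b + ω (star b)).im = 0 := by
    intro b
    obtain ⟨r, -, hr⟩ := hpos (1 + b)
    have hexp : ω (star (1 + b) * (1 + b)) = ω 1 + ω b + ω (star b) + ω (star b * b) := by
      have halg : star (1 + b) * (1 + b) = 1 + b + star b + star b * b := by
        rw [star_add, star_one]; noncomm_ring
      rw [halg]
      simp only [hlin.map_add]
    obtain ⟨r₁, -, hr₁⟩ := hpos b
    rw [hexp, hone, hr₁] at hr
    have := congrArg Complex.im hr
    simpa using this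
  have key2 : (ω a + ω (star a)).im = 0 := key a
  have key3 : (ω (Complex.I • a) + ω (star (Complex.I • a))).im = 0 := key _
  rw [hlin.map_smul, star_smul, hlin.map_smul] at key3
  simp only [star_one, RCLike.star_def, Complex.conj_I, smul_eq_mul, neg_mul] at key3
  set u := ω a with hu
  set v := ω (star a) with hv
  have h1 : u.im + v.im = 0 := by simpa using key2
  have h2 : u.re - v.re = 0 := by
    have : (Complex.I * u + -(Complex.I * v)).im = 0 := by simpa using key3
    simp [Complex.add_im, Complex.mul_im] at this; linarith
  apply Complex.ext
  · simp only [Complex.conj_re]; linarith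
  · simp only [Complex.conj_im]; linarith

/-- If `ω (star n * n) = 0`, then `ω (B * n) = 0` for every `B`. -/
lemma IsState.mul_eq_zero (hω : IsState ω) {n : 𝔄} (hn : ω (star n * n) = 0)
    (B : 𝔄) : ω (B * n) = 0 := by
  obtain ⟨hcont, hlin, hone, hpos⟩ := hω
  set c := ω (B * n) with hc
  by_contra hc0
  have expand : ∀ t : ℂ, ω (star (star B + t • n) * (star B + t • n)) =
      ω (B * star B) + (t * c + (starRingEnd ℂ t) * (starRingEnd ℂ c)) := by
    intro t
    have hstar : ω (star n * star B) = starRingEnd ℂ c := by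
      rw [← star_mul]
      exact IsState.map_star ⟨hcont, hlin, hone, hpos⟩ (B * n)
    rw [star_add, star_star, star_smul, add_mul, mul_add, mul_add]
    simp only [hlin.map_add, smul_mul_assoc, mul_smul_comm, smul_smul, hlin.map_smul,
      hstar, hn, smul_eq_mul, mul_zero, RCLike.star_def, ← hc]
    ring
  have key : ∀ s : ℝ, 0 ≤ (ω (B * star B)).re - 2 * s * Complex.normSq c := by
    intro s
    set t : ℂ := -(s : ℂ) * starRingEnd ℂ c with ht
    obtain ⟨r, hr0, hr⟩ := hpos (star B + t • n)
    have h1 : t * c + (starRingEnd ℂ t) * (starRingEnd ℂ c)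
        = ((-2 * s * Complex.normSq c : ℝ) : ℂ) := by
      have hc1 : (starRingEnd ℂ) c * c = (Complex.normSq c : ℂ) := by
        rw [mul_comm]; exact Complex.mul_conj c
      have hc2 : c * (starRingEnd ℂ) c = (Complex.normSq c : ℂ) := Complex.mul_conj c
      rw [ht, map_mul, map_neg, Complex.conj_conj, Complex.conj_ofReal,
        mul_assoc, hc1, mul_assoc, hc2]
      push_cast
      ring
    have heq := (expand t).symm.trans hr
    rw [h1] at heq
    have him := congrArg Complex.re heq
    simp only [Complex.add_re, Complex.ofReal_re] at him
    linarith [hr0, him.symm.le, him.le]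
  have hnsq : 0 < Complex.normSq c := Complex.normSq_pos.mpr hc0
  set X := (ω (B * star B)).re with hX
  have hkey := key ((X + 1) / (2 * Complex.normSq c))
  have hne : (2 * Complex.normSq c) ≠ 0 := by positivity
  have hmul : 2 * ((X + 1) / (2 * Complex.normSq c)) * Complex.normSq c = X + 1 := by
    field_simp
  linarith [hkey, hmul.le, hmul.symm.le]

end Aux

/-- Functional calculus maps eigenstates to eigenstates: if `A` is normal, `f` is
continuous on the spectrum of `A`, and `ω` is an eigenstate of `A` with eigenvalue `l`,
then `ω` is an eigenstate of `f(A)` with eigenvalue `f(l)`. -/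
theorem eigenstate_cfc (A : 𝔄) (hA : A * star A = star A * A) (f : ℂ → ℂ)
    (hf : ContinuousOn f (spectrum ℂ A)) (ω : 𝔄 → ℂ) (hω : IsState ω) (l : ℂ)
    (h : IsEigenstate ω A l) :
    IsEigenstate ω (cfc f A) (f l) := by
  have hA' : IsStarNormal A := ⟨hA.symm⟩
  obtain ⟨hcont, hlin, hone, hpos⟩ := hω
  have hω' : IsState ω := ⟨hcont, hlin, hone, hpos⟩
  -- basic consequences
  have hsub : ∀ B : 𝔄, ω (B * (A - l • 1)) = 0 := fun B => by
    rw [mul_sub, hlin.map_sub, mul_smul_comm, mul_one, hlin.map_smul, h B, smul_eq_mul, sub_self]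
  -- l is in the spectrum
  have hl : l ∈ spectrum ℂ A := by
    rw [spectrum.mem_iff]
    intro hunit
    obtain ⟨u, hu⟩ := hunit
    have h2 : ((u⁻¹ : 𝔄ˣ) : 𝔄) * (l • 1 - A) = 1 := by
      rw [← Algebra.algebraMap_eq_smul_one, ← hu]
      exact_mod_cast u.inv_mul
    have h1 : (-((u⁻¹ : 𝔄ˣ) : 𝔄)) * (A - l • 1) = 1 := by
      rw [show A - l • 1 = -(l • 1 - A) from (neg_sub _ _).symm, neg_mul_neg]
      exact h2
    have h3 := hsub (-((u⁻¹ : 𝔄ˣ) : 𝔄))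
    rw [h1, hone] at h3
    exact one_ne_zero h3
  -- ω ((A - l)* (A - l)) = 0
  have hωA : ω A = l := by
    have := h 1; rw [one_mul, hone, mul_one] at this; exact this
  have hωAstar : ω (star A) = starRingEnd ℂ l := by
    rw [hω'.map_star, hωA]
  have hωAA : ω (star A * A) = l * starRingEnd ℂ l := by
    have := h (star A); rw [this, hωAstar]
  set N : 𝔄 := A - l • 1 with hN
  have hNstarN : ω (star N * N) = 0 := by
    have hexp : star N * N = star A * A - l • star A - (starRingEnd ℂ l) • A
        + (l * starRingEnd ℂ l) • 1 := by
      rw [hN, star_sub, star_smul, star_one]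
      simp only [RCLike.star_def, sub_mul, mul_sub, smul_mul_assoc, mul_smul_comm,
        smul_smul, mul_one, one_mul, smul_sub]
      abel
    rw [hexp, hlin.map_add, hlin.map_sub, hlin.map_sub, hlin.map_smul, hlin.map_smul,
      hlin.map_smul, hωAA, hωAstar, hωA, hone]
    simp only [smul_eq_mul, mul_one]
    ring
  -- by normality, ω (N N*) = 0 too, hence ω (B * star N) = 0
  have hNNstar : ω (star (star N) * star N) = 0 := by
    have hcomm : N * star N = star N * N := by
      have hdiff : N * star N - star N * N = A * star A - star A * A := by
        rw [hN, star_sub, star_smul, star_one]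
        simp only [RCLike.star_def, sub_mul, mul_sub, smul_mul_assoc, mul_smul_comm,
          smul_smul, mul_one, one_mul, smul_sub]
        rw [mul_comm ((starRingEnd ℂ) l) l]
        abel
      rw [hA, sub_self] at hdiff
      exact sub_eq_zero.mp hdiff
    rw [star_star, hcomm, hNstarN]
  have hBstarN : ∀ B : 𝔄, ω (B * star N) = 0 := fun B =>
    hω'.mul_eq_zero hNNstar B
  -- hence ω (B * star A) = conj l * ω B
  have hstarA : ∀ B : 𝔄, ω (B * star A) = starRingEnd ℂ l * ω B := by
    intro B
    have := hBstarN B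
    rw [hN, star_sub, star_smul, star_one, mul_sub, hlin.map_sub, mul_smul_comm,
      hlin.map_smul, mul_one, sub_eq_zero] at this
    rw [this]; simp [smul_eq_mul, RCLike.star_def]
  -- induction over continuous functions
  set σ := spectrum ℂ A with hσ
  have key : ∀ g : C(σ, ℂ), ∀ B : 𝔄, ω (B * cfcHom hA' g) = g ⟨l, hl⟩ * ω B := by
    intro g
    induction g using ContinuousMap.induction_on_of_compact with
    | const r =>
      intro B
      have : cfcHom hA' (ContinuousMap.const σ r) = r • 1 := by
        have : (ContinuousMap.const σ r) = algebraMap ℂ C(σ, ℂ) r := rfl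
        rw [this, AlgHomClass.commutes, Algebra.algebraMap_eq_smul_one]
      rw [this, mul_smul_comm, hlin.map_smul, mul_one]
      simp [smul_eq_mul]
    | id =>
      intro B
      rw [cfcHom_id hA']
      exact h B
    | star_id =>
      intro B
      rw [map_star, cfcHom_id hA']
      exact hstarA B
    | add g₁ g₂ h₁ h₂ =>
      intro B
      rw [map_add, mul_add, hlin.map_add, h₁ B, h₂ B]
      simp only [ContinuousMap.add_apply]
      ring
    | mul g₁ g₂ h₁ h₂ =>
      intro B
      rw [map_mul, ← mul_assoc, h₂ (B * cfcHom hA' g₁), h₁ B]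
      simp only [ContinuousMap.mul_apply]
      ring
    | frequently g hg =>
      have hclosed : IsClosed {g : C(σ, ℂ) | ∀ B : 𝔄, ω (B * cfcHom hA' g) = g ⟨l, hl⟩ * ω B} := by
        rw [Set.setOf_forall]
        refine isClosed_iInter fun B => isClosed_eq ?_ ?_
        · exact hcont.comp <| (continuous_mul_left B).comp (cfcHom_continuous hA')
        · exact (continuous_mul_right (ω B)).comp <|
            continuous_eval_const (⟨l, hl⟩ : σ)
      exact hclosed.closure_subset (mem_closure_iff_frequently.mpr hg)
  intro B
  rw [cfc_apply f A hA' hf]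
  exact key ⟨_, hf.restrict⟩ B
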